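/- arXiv:math/0011093 — 2 statements merged into one kernel-verified Lean document; each statement's English description precedes it below -/
import Mathlib

section
/- Let {Z_j} be i.i.d. standard Gaussian random variables and σ_j > 0 with 1/σ_j² = 2 log j + 2 log log j (for j ≥ 2). Define W_1 = σ_1 Z_1, W_2 = -W_1, W_3 = σ_2 Z_2, W_4 = -W_3, etc. Then P( sup_{j≥1} W_j ≥ 1 ) = 1. -/
set_option maxHeartbeats 1000000

open MeasureTheory ProbabilityTheory Real Filter Set

lemma gpdf_eq (x : ℝ) : gaussianPDF 0 1 x = ENNReal.ofReal ((Real.sqrt (2*Real.pi))⁻¹ * Real.exp (-x^2/2)) := by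
  rw [gaussianPDF, gaussianPDFReal]; norm_num

lemma gauss_tail_lb {v : ℝ} (hv : 0 ≤ v) :
    ENNReal.ofReal ((Real.sqrt (2*Real.pi))⁻¹ * Real.exp (-(v+1)^2/2)) ≤ gaussianReal 0 1 (Ioi v) := by
  rw [gaussianReal_apply 0 one_ne_zero]
  calc ENNReal.ofReal ((Real.sqrt (2*Real.pi))⁻¹ * Real.exp (-(v+1)^2/2))
      = ∫⁻ _ in Ioc v (v+1), ENNReal.ofReal ((Real.sqrt (2*Real.pi))⁻¹ * Real.exp (-(v+1)^2/2)) ∂volume := by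
        rw [setLIntegral_const, Real.volume_Ioc]
        norm_num
    _ ≤ ∫⁻ x in Ioc v (v+1), gaussianPDF 0 1 x ∂volume := by
        refine setLIntegral_mono (measurable_gaussianPDF 0 1) fun x hx => ?_
        rw [gpdf_eq]
        refine ENNReal.ofReal_le_ofReal ?_
        have h1 : 0 < x := lt_of_le_of_lt hv hx.1
        have h2 : x ≤ v + 1 := hx.2
        refine mul_le_mul_of_nonneg_left ?_ (by positivity)
        apply Real.exp_le_exp.mpr
        nlinarith
    _ ≤ ∫⁻ x in Ioi v, gaussianPDF 0 1 x ∂volume :=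
        lintegral_mono_set Ioc_subset_Ioi_self

lemma gauss_tail_ub {v : ℝ} (hv : 1 ≤ v) :
    gaussianReal 0 1 (Ioi v) ≤ ENNReal.ofReal (Real.exp (-v^2/2)) := by
  rw [gaussianReal_apply 0 one_ne_zero]
  have hint : IntegrableOn (fun x : ℝ => Real.exp (-v^2/2) * (Real.exp v * Real.exp (-x))) (Ioi v) := by
    have h := (exp_neg_integrableOn_Ioi v (one_pos)).const_mul (Real.exp (-v^2/2) * Real.exp v)
    refine IntegrableOn.congr_fun h (fun x _ => by rw [neg_one_mul]; ring) measurableSet_Ioi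
  calc ∫⁻ x in Ioi v, gaussianPDF 0 1 x ∂volume
      ≤ ∫⁻ x in Ioi v, ENNReal.ofReal (Real.exp (-v^2/2) * (Real.exp v * Real.exp (-x))) ∂volume := by
        refine setLIntegral_mono (by fun_prop) fun x hx => ?_
        rw [gpdf_eq]
        refine ENNReal.ofReal_le_ofReal ?_
        have hx' : v < x := hx
        have hsq : (1:ℝ) ≤ Real.sqrt (2*Real.pi) := by
          rw [show (1:ℝ) = Real.sqrt 1 by simp]
          exact Real.sqrt_le_sqrt (by nlinarith [Real.pi_gt_three])
        have h1 : (Real.sqrt (2*Real.pi))⁻¹ ≤ 1 := by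
          rw [inv_le_one_iff₀]; right; exact hsq
        have h2 : Real.exp (-x^2/2) ≤ Real.exp (-v^2/2) * (Real.exp v * Real.exp (-x)) := by
          rw [← Real.exp_add, ← Real.exp_add]
          apply Real.exp_le_exp.mpr
          nlinarith
        calc (Real.sqrt (2*Real.pi))⁻¹ * Real.exp (-x^2/2) ≤ 1 * Real.exp (-x^2/2) :=
              mul_le_mul_of_nonneg_right h1 (Real.exp_nonneg _)
          _ = Real.exp (-x^2/2) := one_mul _
          _ ≤ _ := h2
    _ = ENNReal.ofReal (∫ x in Ioi v, Real.exp (-v^2/2) * (Real.exp v * Real.exp (-x)) ∂volume) := by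
        rw [← ofReal_integral_eq_lintegral_ofReal hint]
        exact Filter.Eventually.of_forall (fun x => by positivity)
    _ ≤ ENNReal.ofReal (Real.exp (-v^2/2)) := by
        apply ENNReal.ofReal_le_ofReal
        rw [MeasureTheory.integral_const_mul, MeasureTheory.integral_const_mul, integral_exp_neg_Ioi]
        rw [← Real.exp_add]
        simp

lemma gauss_neg_tail (v : ℝ) : gaussianReal 0 1 (Iio (-v)) = gaussianReal 0 1 (Ioi v) := by
  have hmap := gaussianReal_map_const_mul (μ := 0) (v := 1) (-1 : ℝ)
  replace hmap : Measure.map (fun x => -1 * x) (gaussianReal 0 1) = gaussianReal 0 1 := by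
    rw [hmap]; congr 1
    · simp
    · apply NNReal.eq; simp
  conv_lhs => rw [← hmap]
  rw [Measure.map_apply (measurable_const_mul (-1)) measurableSet_Iio]
  congr 1
  ext x
  simp only [mem_preimage, mem_Iio, mem_Ioi]
  constructor <;> intro h <;> linarith

lemma gauss_abs_tail_ub {v : ℝ} (hv : 1 ≤ v) :
    gaussianReal 0 1 {x | v < |x|} ≤ ENNReal.ofReal (2 * Real.exp (-v^2/2)) := by
  have hsub : {x : ℝ | v < |x|} ⊆ Iio (-v) ∪ Ioi v := by
    intro x hx
    simp only [mem_setOf_eq] at hx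
    rcases lt_abs.mp hx with h | h
    · exact Or.inr h
    · exact Or.inl (by simpa [mem_Iio] using by linarith)
  calc gaussianReal 0 1 {x | v < |x|} ≤ gaussianReal 0 1 (Iio (-v) ∪ Ioi v) := measure_mono hsub
    _ ≤ gaussianReal 0 1 (Iio (-v)) + gaussianReal 0 1 (Ioi v) := measure_union_le _ _
    _ = gaussianReal 0 1 (Ioi v) + gaussianReal 0 1 (Ioi v) := by rw [gauss_neg_tail]
    _ ≤ ENNReal.ofReal (Real.exp (-v^2/2)) + ENNReal.ofReal (Real.exp (-v^2/2)) := by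
        gcongr <;> exact gauss_tail_ub hv
    _ = ENNReal.ofReal (2 * Real.exp (-v^2/2)) := by
        rw [← ENNReal.ofReal_add (by positivity) (by positivity)]; ring_nf

-- little-o facts: eventually log x + 2*sqrt x + 1/2 ≤ eps * x
lemma aux_eventually {ε : ℝ} (hε : 0 < ε) :
    ∀ᶠ x : ℝ in atTop, Real.log x + 2 * Real.sqrt x + 1/2 ≤ ε * x := by
  have t1 : Tendsto (fun x : ℝ => Real.log x / x) atTop (nhds 0) :=
    Real.isLittleO_log_id_atTop.tendsto_div_nhds_zero
  have t2 : Tendsto (fun x : ℝ => Real.sqrt x / x) atTop (nhds 0) := by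
    have h := tendsto_rpow_neg_atTop (y := 1/2) (by norm_num)
    refine Tendsto.congr' ?_ h
    filter_upwards [eventually_gt_atTop (0:ℝ)] with x hx
    rw [show -(1/2 : ℝ) = 1/2 - 1 by norm_num, Real.rpow_sub hx, Real.rpow_one,
      Real.sqrt_eq_rpow]
  have t3 : Tendsto (fun x : ℝ => (1/2 : ℝ) / x) atTop (nhds 0) :=
    tendsto_const_nhds.div_atTop tendsto_id
  have tall : Tendsto (fun x : ℝ => (Real.log x + 2 * Real.sqrt x + 1/2) / x) atTop (nhds 0) := by
    have := (t1.add ((t2.const_mul 2))).add t3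
    simp only [mul_zero, add_zero] at this
    refine Tendsto.congr (fun x => ?_) this
    ring
  filter_upwards [tall.eventually_lt_const hε, eventually_gt_atTop (0:ℝ)] with x h1 h2
  have := mul_le_mul_of_nonneg_right h1.le h2.le
  rw [div_mul_cancel₀ _ (ne_of_gt h2)] at this
  linarith

lemma sum_tails_top {t : ℝ} (ht0 : 0 < t) (ht1 : t < 1) (σ : ℕ → ℝ)
    (hσpos : ∀ j, 1 ≤ j → 0 < σ j)
    (hσ : ∀ j : ℕ, 2 ≤ j → 1 / (σ j) ^ 2 = 2 * Real.log j + 2 * Real.log (Real.log j)) :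
    ∑' k, gaussianReal 0 1 (Ioi (t / σ k)) = ⊤ := by
  by_contra h
  set s : ℝ := (1 + t^2)/2 with hs_def
  have hs1 : s < 1 := by nlinarith
  have hε : (0:ℝ) < (1 - t^2)/2 := by nlinarith
  set C : ℝ := (Real.sqrt (2*Real.pi))⁻¹ with hC_def
  have hC : 0 < C := by positivity
  -- eventual bound on exponents
  have hL : Tendsto (fun k : ℕ => Real.log k) atTop atTop :=
    Real.tendsto_log_atTop.comp tendsto_natCast_atTop_atTop
  have hev : ∀ᶠ k : ℕ in atTop,
      C * (k:ℝ) ^ (-s) ≤ (gaussianReal 0 1 (Ioi (t / σ k))).toReal := by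
    filter_upwards [hL.eventually (aux_eventually hε), hL.eventually (eventually_ge_atTop (1:ℝ)),
      eventually_ge_atTop 3] with k hk1 hk2 hk3
    set L : ℝ := Real.log k with hLdef
    have hkpos : (0:ℝ) < k := by positivity
    have hσk : 0 < σ k := hσpos k (by omega)
    have hℓ : Real.log L ≤ L := Real.log_le_self (by linarith)
    have hℓ0 : 0 ≤ Real.log L := Real.log_nonneg hk2
    have hq2 : (t / σ k)^2 = t^2 * (2*L + 2*Real.log L) := by
      have := hσ k (by omega)
      rw [div_pow]
      rw [show t^2 / σ k ^ 2 = t^2 * (1 / σ k ^2) by ring, this]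
    have hq0 : 0 ≤ t / σ k := by positivity
    have hq_le : t / σ k ≤ 2 * Real.sqrt L := by
      have h1 : (t / σ k)^2 ≤ (2*Real.sqrt L)^2 := by
        rw [hq2, mul_pow, Real.sq_sqrt (by linarith)]
        nlinarith
      calc t / σ k = Real.sqrt ((t / σ k)^2) := (Real.sqrt_sq hq0).symm
        _ ≤ Real.sqrt ((2*Real.sqrt L)^2) := Real.sqrt_le_sqrt h1
        _ = 2*Real.sqrt L := Real.sqrt_sq (by positivity)
    -- exponent bound
    have hexp : (t / σ k + 1)^2/2 ≤ s * L := by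
      have expand : (t / σ k + 1)^2/2 = (t/σ k)^2/2 + (t/σ k) + 1/2 := by ring
      rw [expand, hq2]
      have h1 : t^2 * (2*L + 2*Real.log L) / 2 = t^2 * L + t^2 * Real.log L := by ring
      rw [h1]
      have h2 : t^2 * Real.log L ≤ Real.log L := by nlinarith
      have h3 : Real.log L + 2*Real.sqrt L + 1/2 ≤ (1 - t^2)/2 * L := hk1
      rw [hs_def]
      nlinarith
    -- conclude
    have hlb := gauss_tail_lb hq0
    have hfin : gaussianReal 0 1 (Ioi (t / σ k)) ≠ ⊤ := measure_ne_top _ _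
    rw [← ENNReal.ofReal_le_iff_le_toReal hfin]
    refine le_trans ?_ hlb
    apply ENNReal.ofReal_le_ofReal
    refine mul_le_mul_of_nonneg_left ?_ hC.le
    rw [Real.rpow_def_of_pos hkpos]
    apply Real.exp_le_exp.mpr
    rw [show Real.log k * (-s) = -(s * L) by rw [hLdef]; ring]
    linarith [hexp]
  obtain ⟨K, hK⟩ := eventually_atTop.mp hev
  have hsummable : Summable (fun k => (gaussianReal 0 1 (Ioi (t / σ k))).toReal) :=
    ENNReal.summable_toReal h
  have hs2 : Summable (fun k : ℕ => C * ((k + K : ℕ):ℝ) ^ (-s)) := by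
    have hbig : Summable (fun k : ℕ => (gaussianReal 0 1 (Ioi (t / σ (k + K)))).toReal) :=
      (summable_nat_add_iff K).mpr hsummable
    refine Summable.of_nonneg_of_le (fun k => by positivity)
      (fun k => hK (k + K) (Nat.le_add_left K k)) hbig
  have hs3 : Summable (fun k : ℕ => ((k + K : ℕ):ℝ) ^ (-s)) := by
    have := hs2.mul_left C⁻¹
    refine this.congr fun k => ?_
    rw [← mul_assoc, inv_mul_cancel₀ hC.ne', one_mul]
  have hs4 : Summable (fun k : ℕ => (k:ℝ) ^ (-s)) := (summable_nat_add_iff K).mp hs3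
  have := Real.summable_nat_rpow.mp hs4
  linarith

lemma sum_bad_ne_top {Ω : Type*} [MeasurableSpace Ω] (μ : Measure Ω) [IsProbabilityMeasure μ]
    (Z : ℕ → Ω → ℝ) (hZmeas : ∀ j, Measurable (Z j))
    (hZlaw : ∀ j, Measure.map (Z j) μ = gaussianReal 0 1)
    (σ : ℕ → ℝ) (hσpos : ∀ j, 1 ≤ j → 0 < σ j)
    (hσ : ∀ j : ℕ, 2 ≤ j → 1 / (σ j) ^ 2 = 2 * Real.log j + 2 * Real.log (Real.log j)) :
    ∑' k, μ (Z k ⁻¹' {x | 2 / σ k < |x|}) ≠ ⊤ := by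
  have hSmeas : ∀ v : ℝ, MeasurableSet {x : ℝ | v < |x|} :=
    fun v => measurableSet_lt measurable_const _root_.measurable_abs
  have hmap : ∀ k, μ (Z k ⁻¹' {x | 2 / σ k < |x|}) = gaussianReal 0 1 {x | 2 / σ k < |x|} := by
    intro k
    rw [← hZlaw k, Measure.map_apply (hZmeas k) (hSmeas _)]
  set a : ℕ → ℝ := fun k => if k < 3 then (1:ℝ) else 2 * (k:ℝ) ^ (-(4:ℝ)) with ha_def
  have ha_nonneg : ∀ k, 0 ≤ a k := by
    intro k; by_cases h : k < 3 <;> simp [ha_def, h] <;> positivity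
  have ha_sum : Summable a := by
    have h1 : Summable (fun k : ℕ => 2 * (k:ℝ) ^ (-(4:ℝ))) :=
      (Real.summable_nat_rpow.mpr (by norm_num)).mul_left 2
    refine (summable_nat_add_iff 3).mp ?_
    refine ((summable_nat_add_iff 3).mpr h1).congr fun k => ?_
    simp [ha_def]
  have hbound : ∀ k, μ (Z k ⁻¹' {x | 2 / σ k < |x|}) ≤ ENNReal.ofReal (a k) := by
    intro k
    by_cases hk : k < 3
    · simp only [ha_def, hk, if_true, ENNReal.ofReal_one]
      exact prob_le_one
    · push_neg at hk
      have hσk : 0 < σ k := hσpos k (by omega)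
      have hkpos : (0:ℝ) < k := by positivity
      have hL1 : (1:ℝ) ≤ Real.log k := by
        rw [Real.le_log_iff_exp_le hkpos]
        calc Real.exp 1 ≤ 2.7182818286 := Real.exp_one_lt_d9.le
          _ ≤ (k:ℝ) := by
            have : (3:ℝ) ≤ (k:ℝ) := by exact_mod_cast hk
            linarith
      have hℓ0 : 0 ≤ Real.log (Real.log k) := Real.log_nonneg hL1
      have hv2 : (2 / σ k)^2 = 4 * (2 * Real.log k + 2 * Real.log (Real.log k)) := by
        rw [div_pow, show (2:ℝ)^2 / σ k ^ 2 = 4 * (1 / σ k ^2) by ring, hσ k (by omega)]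
      have hv1 : 1 ≤ 2 / σ k := by
        have h1 : (1:ℝ)^2 ≤ (2/σ k)^2 := by rw [hv2]; nlinarith
        have h0 : (0:ℝ) ≤ 2 / σ k := by positivity
        nlinarith
      rw [hmap k]
      refine le_trans (gauss_abs_tail_ub hv1) (ENNReal.ofReal_le_ofReal ?_)
      simp only [ha_def, if_neg (by omega : ¬ k < 3)]
      refine mul_le_mul_of_nonneg_left ?_ (by norm_num)
      rw [Real.rpow_def_of_pos hkpos]
      apply Real.exp_le_exp.mpr
      rw [hv2]
      nlinarith [Real.log_nonneg (by linarith : (1:ℝ) ≤ Real.log k)]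
  refine ne_top_of_le_ne_top ?_ (ENNReal.tsum_le_tsum hbound)
  rw [← ENNReal.ofReal_tsum_of_nonneg ha_nonneg ha_sum]
  exact ENNReal.ofReal_ne_top

/-- Marcus–Shepp example: interleaving `σ_k Z_k` with their negatives, the
supremum of the resulting centered Gaussian sequence is at least 1 almost surely. -/
theorem marcus_shepp_sup_ge_one
    {Ω : Type*} [MeasurableSpace Ω] (μ : Measure Ω) [IsProbabilityMeasure μ]
    (Z : ℕ → Ω → ℝ) (hZmeas : ∀ j, Measurable (Z j))
    (hZindep : iIndepFun Z μ)
    (hZlaw : ∀ j, Measure.map (Z j) μ = gaussianReal 0 1)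
    (σ : ℕ → ℝ) (hσpos : ∀ j, 1 ≤ j → 0 < σ j)
    (hσ : ∀ j : ℕ, 2 ≤ j →
      1 / (σ j) ^ 2 = 2 * Real.log j + 2 * Real.log (Real.log j))
    (W : ℕ → Ω → ℝ)
    (hWodd : ∀ k : ℕ, W (2 * k + 1) = fun ω => σ (k + 1) * Z (k + 1) ω)
    (hWeven : ∀ k : ℕ, W (2 * k + 2) = fun ω => -(σ (k + 1) * Z (k + 1) ω)) :
    μ {ω | 1 ≤ ⨆ j, ⨆ _ : 1 ≤ j, W j ω} = 1 := by
  -- the sequence of thresholds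
  set t : ℕ → ℝ := fun n => 1 - 1/(n+2) with ht_def
  have ht0 : ∀ n, 0 < t n := by
    intro n
    have h2 : (2:ℝ) ≤ (n:ℝ) + 2 := by
      have : (0:ℝ) ≤ (n:ℝ) := Nat.cast_nonneg n
      linarith
    have : 1/((n:ℝ)+2) ≤ 1/2 := by
      apply one_div_le_one_div_of_le <;> linarith
    simp only [ht_def]; linarith
  have ht1 : ∀ n, t n < 1 := by
    intro n
    have : 0 < 1/((n:ℝ)+2) := by positivity
    simp only [ht_def]; linarith
  -- good events
  set A : ℕ → ℕ → Set Ω := fun n k => Z k ⁻¹' Ioi (t n / σ k) with hA_def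
  set B : ℕ → Set Ω := fun k => Z k ⁻¹' {x | 2 / σ k < |x|} with hB_def
  have hAmeas : ∀ n k, MeasurableSet (A n k) := fun n k => (hZmeas k) measurableSet_Ioi
  have hBmeas : ∀ k, MeasurableSet (B k) :=
    fun k => (hZmeas k) (measurableSet_lt measurable_const _root_.measurable_abs)
  have hGn : ∀ n, μ (limsup (A n) atTop) = 1 := by
    intro n
    refine ProbabilityTheory.measure_limsup_eq_one (hAmeas n) ?_ ?_
    · rw [iIndepSet_iff_meas_biInter (hAmeas n)]
      intro S
      exact hZindep.measure_inter_preimage_eq_mul S (fun i _ => measurableSet_Ioi)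
    · have : ∀ k, μ (A n k) = gaussianReal 0 1 (Ioi (t n / σ k)) := by
        intro k
        rw [hA_def, ← hZlaw k, Measure.map_apply (hZmeas k) measurableSet_Ioi]
      simp_rw [this]
      exact sum_tails_top (ht0 n) (ht1 n) σ hσpos hσ
  have hB0 : μ (limsup B atTop) = 0 :=
    measure_limsup_atTop_eq_zero (sum_bad_ne_top μ Z hZmeas hZlaw σ hσpos hσ)
  -- the a.s. set
  set F : Set Ω := (⋂ n, limsup (A n) atTop) ∩ (limsup B atTop)ᶜ with hF_def
  have hFmeas : MeasurableSet F := by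
    refine (MeasurableSet.iInter (fun n => ?_)).inter (MeasurableSet.measurableSet_limsup hBmeas).compl
    exact MeasurableSet.measurableSet_limsup (hAmeas n)
  have hF1 : μ F = 1 := by
    rw [← prob_compl_eq_zero_iff hFmeas]
    have : Fᶜ = (⋃ n, (limsup (A n) atTop)ᶜ) ∪ limsup B atTop := by
      rw [hF_def, compl_inter, compl_iInter, compl_compl]
    rw [this]
    refine measure_union_null (measure_iUnion_null fun n => ?_) hB0
    rw [prob_compl_eq_zero_iff (MeasurableSet.measurableSet_limsup (hAmeas n))]
    exact hGn n
  -- pointwise argument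
  have hsub : F ⊆ {ω | 1 ≤ ⨆ j, ⨆ _ : 1 ≤ j, W j ω} := by
    rintro ω ⟨h1, h2⟩
    simp only [mem_iInter] at h1
    set g : ℕ → ℝ := fun j => ⨆ _ : 1 ≤ j, W j ω with hg_def
    -- eventual bound from not in limsup B
    have h2' : ∀ᶠ k in atTop, ω ∉ B k := by
      have := Filter.mem_limsup_iff_frequently_mem.not.mp h2
      rwa [Filter.not_frequently] at this
    obtain ⟨K, hK⟩ := eventually_atTop.mp h2'
    -- bound on σ m * |Z m ω| for large m
    have hub : ∀ m, max K 1 ≤ m → σ m * |Z m ω| ≤ 2 := by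
      intro m hm
      have hσm : 0 < σ m := hσpos m (le_trans (le_max_right K 1) hm)
      have := hK m (le_trans (le_max_left K 1) hm)
      simp only [hB_def, mem_preimage, mem_setOf_eq, not_lt] at this
      calc σ m * |Z m ω| ≤ σ m * (2 / σ m) := by
            exact mul_le_mul_of_nonneg_left this hσm.le
        _ = 2 := by field_simp
    -- uniform bound on σ m * |Z m ω| for m ≥ 1
    set K' := max K 1 with hK'_def
    have hne : (Finset.range (K'+1)).Nonempty := Finset.nonempty_range_iff.mpr (by omega)
    set M : ℝ := 2 ⊔ (Finset.range (K'+1)).sup' hne (fun m => σ m * |Z m ω|) with hM_def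
    have hu : ∀ m, 1 ≤ m → σ m * |Z m ω| ≤ M := by
      intro m hm
      rcases le_or_gt K' m with h | h
      · exact le_trans (hub m h) (le_max_left _ _)
      · refine le_trans (Finset.le_sup' (fun m => σ m * |Z m ω|) ?_) (le_max_right _ _)
        exact Finset.mem_range.mpr (by omega)
    -- W bound
    have hWle : ∀ j, 1 ≤ j → W j ω ≤ M := by
      intro j hj
      rcases Nat.even_or_odd j with ⟨m, hm⟩ | ⟨m, hm⟩
      · -- j = 2m, m ≥ 1, so j = 2*(m-1) + 2
        have hm1 : 1 ≤ m := by omega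
        have hj2 : j = 2 * (m - 1) + 2 := by omega
        rw [hj2, hWeven (m-1)]
        have hmm : m - 1 + 1 = m := by omega
        rw [hmm]
        calc -(σ m * Z m ω) ≤ σ m * |Z m ω| := by
              rw [neg_le]
              calc -(σ m * |Z m ω|) ≤ -(σ m * (- Z m ω)) := by
                    rw [neg_le_neg_iff]
                    exact mul_le_mul_of_nonneg_left (neg_le_abs _) (hσpos m hm1).le
                _ = σ m * Z m ω := by ring
          _ ≤ M := hu m hm1
      · have hj2 : j = 2 * m + 1 := by omega
        rw [hj2, hWodd m]
        calc σ (m+1) * Z (m+1) ω ≤ σ (m+1) * |Z (m+1) ω| :=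
              mul_le_mul_of_nonneg_left (le_abs_self _) (hσpos (m+1) (by omega)).le
          _ ≤ M := hu (m+1) (by omega)
    have hM0 : ∀ j, g j ≤ 0 ⊔ M := by
      intro j
      rcases Nat.eq_zero_or_pos j with h0 | h1
      · subst h0
        have : IsEmpty (1 ≤ 0) := by simp
        rw [hg_def]
        simp only []
        rw [Real.iSup_of_isEmpty]
        exact le_max_left _ _
      · have h1' : 1 ≤ j := h1
        rw [hg_def]
        simp only []
        rw [ciSup_pos h1']
        exact le_trans (hWle j h1') (le_max_right _ _)
    have hbdd : BddAbove (range g) := by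
      refine ⟨0 ⊔ M, ?_⟩
      rintro x ⟨j, rfl⟩
      exact hM0 j
    -- lower bound from the good events
    have hlow : ∀ n, t n ≤ ⨆ j, g j := by
      intro n
      have hfreq : ∃ᶠ k in atTop, ω ∈ A n k := Filter.mem_limsup_iff_frequently_mem.mp (h1 n)
      obtain ⟨k, hk2, hkA⟩ := (hfreq.and_eventually (eventually_ge_atTop 2)).exists
      have hσk : 0 < σ k := hσpos k (by omega)
      have hZk : t n / σ k < Z k ω := hk2
      have hWk : t n < σ k * Z k ω := by
        rwa [div_lt_iff₀ hσk, mul_comm] at hZk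
      have hj : 2 * (k - 1) + 1 = 2 * k - 1 := by omega
      have hkk : k - 1 + 1 = k := by omega
      have hgj : t n ≤ g (2 * (k-1) + 1) := by
        rw [hg_def]
        simp only []
        rw [ciSup_pos (by omega : 1 ≤ 2 * (k-1) + 1)]
        rw [hWodd (k-1), hkk]
        exact hWk.le
      exact le_trans hgj (le_ciSup hbdd _)
    -- conclude
    have htend : Tendsto t atTop (nhds 1) := by
      rw [ht_def]
      have hx : Tendsto (fun n : ℕ => (n:ℝ)+2) atTop atTop :=
        tendsto_atTop_add_const_right _ 2 tendsto_natCast_atTop_atTop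
      have h0 : Tendsto (fun n : ℕ => ((n:ℝ)+2)⁻¹) atTop (nhds 0) :=
        tendsto_inv_atTop_zero.comp hx
      have : Tendsto (fun n : ℕ => 1 - ((n:ℝ)+2)⁻¹) atTop (nhds 1) := by
        simpa using (tendsto_const_nhds (x := (1:ℝ)) (f := atTop (α := ℕ))).sub h0
      refine Tendsto.congr (fun n => ?_) this
      rw [one_div]
    exact le_of_tendsto htend (Filter.Eventually.of_forall hlow)
  refine le_antisymm prob_le_one ?_
  calc (1:ENNReal) = μ F := hF1.symm
    _ ≤ μ {ω | 1 ≤ ⨆ j, ⨆ _ : 1 ≤ j, W j ω} := measure_mono hsub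
end

section
/- Every non-negative, non-decreasing, convex function g : ℝ → ℝ with g(-∞) = 0 can be approximated pointwise by functions in the closed positive linear (conic) hull of the family {g_t : t ∈ ℝ} where g_t(x) = (x − t)₊. -/
open MeasureTheory Real Filter Set

/-- Grid points `-n + k/n`. -/
noncomputable def hingeA (n k : ℕ) : ℝ := -(n : ℝ) + (k : ℝ) / (n : ℝ)

/-- Slopes of the chords of `g` on consecutive grid intervals. -/
noncomputable def hingeS (g : ℝ → ℝ) (n k : ℕ) : ℝ :=
  (n : ℝ) * (g (hingeA n (k + 1)) - g (hingeA n k))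

/-- Coefficients: differences of consecutive slopes. -/
noncomputable def hingeC (g : ℝ → ℝ) (n : ℕ) : ℕ → ℝ
  | 0 => hingeS g n 0
  | (k + 1) => hingeS g n (k + 1) - hingeS g n k

lemma hingeA_succ (n k : ℕ) (hn : 0 < n) :
    hingeA n (k + 1) = hingeA n k + 1 / (n : ℝ) := by
  have hn' : (n : ℝ) ≠ 0 := Nat.cast_ne_zero.mpr hn.ne'
  simp only [hingeA]
  push_cast
  field_simp
  ring

lemma hingeC_eq (g : ℝ → ℝ) (n k : ℕ) :
    hingeC g n k = hingeS g n k - (if k = 0 then 0 else hingeS g n (k - 1)) := by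
  cases k <;> simp [hingeC]

lemma abel_sum (s φ : ℕ → ℝ) (m : ℕ) :
    ∑ k ∈ Finset.range m, (s k - (if k = 0 then 0 else s (k - 1))) * φ k
      = ∑ k ∈ Finset.range m, s k * (φ k - φ (k + 1))
        + (if m = 0 then 0 else s (m - 1) * φ m) := by
  induction m with
  | zero => simp
  | succ m ih =>
    rw [Finset.sum_range_succ, Finset.sum_range_succ, ih]
    rcases Nat.eq_zero_or_pos m with rfl | hm
    · simp; ring
    · have h1 : m ≠ 0 := hm.ne'
      simp only [h1, if_false, Nat.succ_ne_zero, Nat.add_sub_cancel]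
      ring

section g

variable {g : ℝ → ℝ} (hg_mono : Monotone g) (hg_conv : ConvexOn ℝ univ g)

include hg_mono in
lemma hingeS_nonneg {n : ℕ} (hn : 0 < n) (k : ℕ) : 0 ≤ hingeS g n k := by
  have hle : hingeA n k ≤ hingeA n (k + 1) := by
    rw [hingeA_succ n k hn]
    have : (0 : ℝ) < 1 / (n : ℝ) := by positivity
    linarith
  have := hg_mono hle
  have hn' : (0 : ℝ) ≤ (n : ℝ) := Nat.cast_nonneg n
  have : 0 ≤ g (hingeA n (k + 1)) - g (hingeA n k) := by linarith
  exact mul_nonneg hn' this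

include hg_mono hg_conv in
lemma hingeC_nonneg {n : ℕ} (hn : 0 < n) (k : ℕ) : 0 ≤ hingeC g n k := by
  cases k with
  | zero => exact hingeS_nonneg hg_mono hn 0
  | succ k =>
    have hnR : (0 : ℝ) < (n : ℝ) := Nat.cast_pos.mpr hn
    have hstep : (0 : ℝ) < 1 / (n : ℝ) := by positivity
    have h1 : hingeA n (k + 1) = hingeA n k + 1 / n := hingeA_succ n k hn
    have h2 : hingeA n (k + 2) = hingeA n (k + 1) + 1 / n := hingeA_succ n (k + 1) hn
    have hxy : hingeA n k < hingeA n (k + 1) := by rw [h1]; linarith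
    have hyz : hingeA n (k + 1) < hingeA n (k + 2) := by rw [h2]; linarith
    have hslope := hg_conv.slope_mono_adjacent (mem_univ (hingeA n k))
      (mem_univ (hingeA n (k + 2))) hxy hyz
    rw [show hingeA n (k + 1) - hingeA n k = 1 / n by rw [h1]; ring,
      show hingeA n (k + 2) - hingeA n (k + 1) = 1 / n by rw [h2]; ring,
      div_le_div_iff_of_pos_right hstep] at hslope
    simp only [hingeC, hingeS]
    nlinarith

include hg_mono hg_conv in
/-- Per-interval lower estimate. -/
lemma hinge_term_lower {n : ℕ} (hn : 0 < n) (x : ℝ) (k : ℕ) :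
    g (min x (hingeA n (k + 1))) - g (min x (hingeA n k)) ≤
      hingeS g n k * (max (x - hingeA n k) 0 - max (x - hingeA n (k + 1)) 0) := by
  have hnR : (0 : ℝ) < (n : ℝ) := Nat.cast_pos.mpr hn
  have hstep : (0 : ℝ) < 1 / (n : ℝ) := by positivity
  set a := hingeA n k with ha
  have hb : hingeA n (k + 1) = a + 1 / n := hingeA_succ n k hn
  have hab : a < a + 1 / n := by linarith
  rw [hb]
  have hs : hingeS g n k * (1 / (n : ℝ)) = g (a + 1 / n) - g a := by
    rw [hingeS, hb, ← ha]
    field_simp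
  rcases le_or_gt x a with hxa | hxa
  · rw [min_eq_left hxa, min_eq_left (hxa.trans hab.le),
      max_eq_right (by linarith : x - a ≤ 0),
      max_eq_right (by linarith : x - (a + 1 / n) ≤ 0)]
    simp
  rcases le_or_gt (a + 1 / n) x with hbx | hxb
  · rw [min_eq_right hbx, min_eq_right (hab.le.trans hbx),
      max_eq_left (by linarith : (0:ℝ) ≤ x - a),
      max_eq_left (by linarith : (0:ℝ) ≤ x - (a + 1 / n))]
    have : x - a - (x - (a + 1 / n)) = 1 / n := by ring
    rw [this, hs]
  · rw [min_eq_left hxb.le, min_eq_right hxa.le,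
      max_eq_left (by linarith : (0:ℝ) ≤ x - a),
      max_eq_right (by linarith : x - (a + 1 / n) ≤ 0), sub_zero]
    have hsec := hg_conv.secant_mono (mem_univ a) (mem_univ x)
      (mem_univ (a + 1 / n)) hxa.ne' hab.ne' hxb.le
    have h2 : (g (a + 1 / n) - g a) / (a + 1 / n - a) = hingeS g n k := by
      rw [show a + 1 / (n:ℝ) - a = 1 / n by ring, ← hs]
      field_simp
    rw [h2, div_le_iff₀ (by linarith : (0:ℝ) < x - a)] at hsec
    linarith

include hg_mono hg_conv in
/-- Per-interval upper estimate. -/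
lemma hinge_term_upper {n : ℕ} (hn : 0 < n) (x : ℝ) (k : ℕ) :
    hingeS g n k * (max (x - hingeA n k) 0 - max (x - hingeA n (k + 1)) 0) ≤
      g (min (x + 1 / n) (hingeA n (k + 1))) - g (min (x + 1 / n) (hingeA n k)) := by
  have hnR : (0 : ℝ) < (n : ℝ) := Nat.cast_pos.mpr hn
  have hstep : (0 : ℝ) < 1 / (n : ℝ) := by positivity
  have hs0 := hingeS_nonneg hg_mono hn k
  set a := hingeA n k with ha
  have hb : hingeA n (k + 1) = a + 1 / n := hingeA_succ n k hn
  have hab : a < a + 1 / n := by linarith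
  rw [hb]
  have hs : hingeS g n k * (1 / (n : ℝ)) = g (a + 1 / n) - g a := by
    rw [hingeS, hb, ← ha]
    field_simp
  rcases le_or_gt x a with hxa | hxa
  · rw [max_eq_right (by linarith : x - a ≤ 0),
      max_eq_right (by linarith : x - (a + 1 / n) ≤ 0)]
    have : g (min (x + 1 / n) a) ≤ g (min (x + 1 / n) (a + 1 / n)) :=
      hg_mono (min_le_min le_rfl hab.le)
    simpa using this
  rcases le_or_gt (a + 1 / n) x with hbx | hxb
  · rw [min_eq_right (by linarith : a + 1/(n:ℝ) ≤ x + 1/n),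
      min_eq_right (by linarith : a ≤ x + 1/(n:ℝ)),
      max_eq_left (by linarith : (0:ℝ) ≤ x - a),
      max_eq_left (by linarith : (0:ℝ) ≤ x - (a + 1 / n))]
    have : x - a - (x - (a + 1 / n)) = 1 / n := by ring
    rw [this, hs]
  · rw [min_eq_right (by linarith : a + 1/(n:ℝ) ≤ x + 1/n),
      min_eq_right (by linarith : a ≤ x + 1/(n:ℝ)),
      max_eq_left (by linarith : (0:ℝ) ≤ x - a),
      max_eq_right (by linarith : x - (a + 1 / n) ≤ 0), sub_zero]
    have : hingeS g n k * (x - a) ≤ hingeS g n k * (1 / n) :=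
      mul_le_mul_of_nonneg_left (by linarith) hs0
    linarith [hs]

include hg_mono hg_conv in
/-- Main sandwich bounds for the approximants. -/
lemma hinge_f_bounds {n : ℕ} (hn : 0 < n) {x : ℝ}
    (hx1 : -(n : ℝ) ≤ x) (hx2 : x ≤ (n : ℝ)) :
    g x - g (-(n : ℝ)) ≤
        (∑ k ∈ Finset.range (2 * n ^ 2), hingeC g n k * max (x - hingeA n k) 0) ∧
      (∑ k ∈ Finset.range (2 * n ^ 2), hingeC g n k * max (x - hingeA n k) 0) ≤
        g (x + 1 / n) - g (-(n : ℝ)) := by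
  have hnR : (0 : ℝ) < (n : ℝ) := Nat.cast_pos.mpr hn
  have hstep : (0 : ℝ) < 1 / (n : ℝ) := by positivity
  set m := 2 * n ^ 2 with hm
  have hmpos : m ≠ 0 := by positivity
  have ha0 : hingeA n 0 = -(n : ℝ) := by simp [hingeA]
  have ham : hingeA n m = (n : ℝ) := by
    have hn' : (n : ℝ) ≠ 0 := hnR.ne'
    rw [hingeA, hm]
    push_cast
    field_simp
    ring
  set φ : ℕ → ℝ := fun k => max (x - hingeA n k) 0 with hφ
  have hφm : φ m = 0 := by
    rw [hφ]
    simp only [ham]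
    exact max_eq_right (by linarith)
  have key : ∑ k ∈ Finset.range m, hingeC g n k * φ k
      = ∑ k ∈ Finset.range m, hingeS g n k * (φ k - φ (k + 1)) := by
    calc ∑ k ∈ Finset.range m, hingeC g n k * φ k
        = ∑ k ∈ Finset.range m,
            (hingeS g n k - (if k = 0 then 0 else hingeS g n (k - 1))) * φ k := by
          refine Finset.sum_congr rfl fun k _ => ?_
          rw [hingeC_eq]
      _ = ∑ k ∈ Finset.range m, hingeS g n k * (φ k - φ (k + 1))
            + (if m = 0 then 0 else hingeS g n (m - 1) * φ m) := abel_sum _ _ m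
      _ = ∑ k ∈ Finset.range m, hingeS g n k * (φ k - φ (k + 1)) := by
          rw [hφm]
          simp
  constructor
  · rw [key]
    have htel : ∑ k ∈ Finset.range m,
        (g (min x (hingeA n (k + 1))) - g (min x (hingeA n k)))
          = g (min x (hingeA n m)) - g (min x (hingeA n 0)) :=
      Finset.sum_range_sub (fun k => g (min x (hingeA n k))) m
    have hbound : ∑ k ∈ Finset.range m,
        (g (min x (hingeA n (k + 1))) - g (min x (hingeA n k)))
          ≤ ∑ k ∈ Finset.range m, hingeS g n k * (φ k - φ (k + 1)) :=
      Finset.sum_le_sum fun k _ => hinge_term_lower hg_mono hg_conv hn x k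
    rw [htel, ham, ha0, min_eq_left hx2, min_eq_right hx1] at hbound
    exact hbound
  · rw [key]
    have htel : ∑ k ∈ Finset.range m,
        (g (min (x + 1 / n) (hingeA n (k + 1))) - g (min (x + 1 / n) (hingeA n k)))
          = g (min (x + 1 / n) (hingeA n m)) - g (min (x + 1 / n) (hingeA n 0)) :=
      Finset.sum_range_sub (fun k => g (min (x + 1 / n) (hingeA n k))) m
    have hbound : ∑ k ∈ Finset.range m, hingeS g n k * (φ k - φ (k + 1))
        ≤ ∑ k ∈ Finset.range m,
            (g (min (x + 1 / n) (hingeA n (k + 1))) - g (min (x + 1 / n) (hingeA n k))) :=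
      Finset.sum_le_sum fun k _ => hinge_term_upper hg_mono hg_conv hn x k
    rw [htel, ham, ha0, min_eq_right (by linarith : -(n:ℝ) ≤ x + 1 / n)] at hbound
    have : g (min (x + 1 / n) (n : ℝ)) ≤ g (x + 1 / n) := hg_mono (min_le_left _ _)
    linarith

end g

/-- Every nonnegative, nondecreasing, convex function on ℝ vanishing at `-∞`
is a pointwise limit of nonnegative linear combinations of the hinge functions
`x ↦ (x - t)₊`. -/
theorem hinge_conic_hull_dense
    (g : ℝ → ℝ) (hg_nonneg : ∀ x, 0 ≤ g x) (hg_mono : Monotone g)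
    (hg_conv : ConvexOn ℝ univ g) (hg_bot : Tendsto g atBot (nhds 0)) :
    ∃ f : ℕ → ℝ → ℝ,
      (∀ n, ∃ (m : ℕ) (c : Fin m → ℝ) (t : Fin m → ℝ),
        (∀ k, 0 ≤ c k) ∧ f n = fun x => ∑ k, c k * max (x - t k) 0) ∧
      ∀ x, Tendsto (fun n => f n x) atTop (nhds (g x)) := by
  refine ⟨fun n x => ∑ k : Fin (2 * n ^ 2), hingeC g n (k : ℕ) * max (x - hingeA n (k : ℕ)) 0,
    fun n => ⟨2 * n ^ 2, fun k => hingeC g n (k : ℕ), fun k => hingeA n (k : ℕ), ?_, rfl⟩, ?_⟩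
  · rcases Nat.eq_zero_or_pos n with rfl | hn
    · exact fun k => k.elim0
    · exact fun k => hingeC_nonneg hg_mono hg_conv hn k
  intro x
  -- convert `Fin` sums to `range` sums
  have hsum : ∀ n : ℕ,
      (∑ k : Fin (2 * n ^ 2), hingeC g n (k : ℕ) * max (x - hingeA n (k : ℕ)) 0)
        = ∑ k ∈ Finset.range (2 * n ^ 2), hingeC g n k * max (x - hingeA n k) 0 := by
    intro n
    exact Fin.sum_univ_eq_sum_range (fun k => hingeC g n k * max (x - hingeA n k) 0) (2 * n ^ 2)
  -- limits of the two bounding sequences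
  have hgneg : Tendsto (fun n : ℕ => g (-(n : ℝ))) atTop (nhds 0) := by
    apply hg_bot.comp
    exact tendsto_neg_atBot_iff.mpr tendsto_natCast_atTop_atTop
  have hlo : Tendsto (fun n : ℕ => g x - g (-(n : ℝ))) atTop (nhds (g x)) := by
    simpa using tendsto_const_nhds.sub hgneg
  have hhi : Tendsto
      (fun n : ℕ => g x + (g (x + 1) - g x) * (1 / (n : ℝ)) - g (-(n : ℝ)))
      atTop (nhds (g x)) := by
    have h1 : Tendsto (fun n : ℕ => (g (x + 1) - g x) * (1 / (n : ℝ))) atTop (nhds 0) := by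
      simpa using tendsto_const_nhds.mul (tendsto_one_div_atTop_nhds_zero_nat : Tendsto (fun n : ℕ => 1 / (n : ℝ)) atTop (nhds 0))
    simpa using (tendsto_const_nhds.add h1).sub hgneg
  refine tendsto_of_tendsto_of_tendsto_of_le_of_le' hlo hhi ?_ ?_
  · filter_upwards [eventually_ge_atTop (⌈|x|⌉₊ + 1)] with n hn
    have hn0 : 0 < n := lt_of_lt_of_le (Nat.succ_pos _) hn
    have hxn : |x| ≤ (n : ℝ) := by
      calc |x| ≤ (⌈|x|⌉₊ : ℝ) := Nat.le_ceil _
        _ ≤ (n : ℝ) := by exact_mod_cast le_trans (Nat.le_succ _) hn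
    obtain ⟨hx1, hx2⟩ := abs_le.mp hxn
    rw [hsum n]
    exact (hinge_f_bounds hg_mono hg_conv hn0 hx1 hx2).1
  · filter_upwards [eventually_ge_atTop (⌈|x|⌉₊ + 1)] with n hn
    have hn0 : 0 < n := lt_of_lt_of_le (Nat.succ_pos _) hn
    have hnR : (0 : ℝ) < (n : ℝ) := Nat.cast_pos.mpr hn0
    have hxn : |x| ≤ (n : ℝ) := by
      calc |x| ≤ (⌈|x|⌉₊ : ℝ) := Nat.le_ceil _
        _ ≤ (n : ℝ) := by exact_mod_cast le_trans (Nat.le_succ _) hn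
    obtain ⟨hx1, hx2⟩ := abs_le.mp hxn
    rw [hsum n]
    have hb := (hinge_f_bounds hg_mono hg_conv hn0 hx1 hx2).2
    -- convexity step: g (x + 1/n) ≤ g x + (g (x+1) - g x) / n
    have hinv1 : 1 / (n : ℝ) ≤ 1 := by
      rw [div_le_one hnR]
      exact_mod_cast hn0
    have hconv := hg_conv.2 (mem_univ x) (mem_univ (x + 1))
      (by linarith : (0:ℝ) ≤ 1 - 1 / (n:ℝ)) (by positivity : (0:ℝ) ≤ 1 / (n:ℝ))
      (by ring : (1 - 1 / (n:ℝ)) + 1 / (n:ℝ) = 1)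
    have hxe : (1 - 1 / (n:ℝ)) • x + (1 / (n:ℝ)) • (x + 1) = x + 1 / n := by
      simp only [smul_eq_mul]
      ring
    rw [hxe, smul_eq_mul, smul_eq_mul] at hconv
    have : g (x + 1 / n) ≤ g x + (g (x + 1) - g x) * (1 / (n:ℝ)) := by nlinarith
    linarith
end
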